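/- For each 0 ≤ k ≤ n-1, F_k(y, w*, ξ) = w*·B_k(y)·ξ satisfies F_k(y + ξ v*, w*, ξ) = F_k(y, w*, ξ) for every row vector v*, and also F_k(y + u w*, w*, ξ) = F_k(y, w*, ξ) for every column vector u; hence F_k is invariant under the coadjoint action of the group GL(n) ⋉ (ℂ^n ⊕ (ℂ^n)*). -/

import Mathlib

open Matrix BigOperators

/-- The signed coefficients of the characteristic polynomial:
`det (t•I - x) = t^n - p 1 x * t^(n-1) - ⋯ - p n x`. -/
noncomputable def charCoeff (n : ℕ) (k : ℕ) (x : Matrix (Fin n) (Fin n) ℂ) : ℂ :=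
  -(x.charpoly.coeff (n - k))

/-- `B n k x = x^k - p 1 x • x^(k-1) - ⋯ - p k x • I`. -/
noncomputable def gradB (n : ℕ) (k : ℕ) (x : Matrix (Fin n) (Fin n) ℂ) :
    Matrix (Fin n) (Fin n) ℂ :=
  x ^ k - ∑ i ∈ Finset.Icc 1 k, charCoeff n i x • x ^ (k - i)


/-- The invariant `F_k(y, w*, ξ) = w* B_k(y) ξ`. -/
noncomputable def Finv (n : ℕ) (k : ℕ) (y : Matrix (Fin n) (Fin n) ℂ)
    (wstar : Matrix (Fin 1) (Fin n) ℂ) (xi : Matrix (Fin n) (Fin 1) ℂ) : ℂ :=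
  (wstar * gradB n k y * xi) 0 0

section Aux
open Polynomial Finset

-- reindexing helper
lemma sum_Icc_reindex {M : Type*} [AddCommMonoid M] (f : ℕ → M) (n : ℕ) :
    ∑ j ∈ Finset.Icc 1 n, f (n - j) = ∑ i ∈ Finset.range n, f i := by
  refine Finset.sum_nbij' (fun j => n - j) (fun i => n - i) ?_ ?_ ?_ ?_ ?_ <;>
    intro a ha <;> simp only [Finset.mem_Icc, Finset.mem_range] at * <;> omega

lemma gradB_zero (n : ℕ) (x : Matrix (Fin n) (Fin n) ℂ) : gradB n 0 x = 1 := by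
  simp [gradB]

lemma gradB_succ (n k : ℕ) (x : Matrix (Fin n) (Fin n) ℂ) :
    gradB n (k+1) x = x * gradB n k x - charCoeff n (k+1) x • 1 := by
  unfold gradB
  rw [Finset.sum_Icc_succ_top (Nat.succ_le_succ (Nat.zero_le k)),
    Matrix.mul_sub, Finset.mul_sum, ← pow_succ']
  have h1 : ∀ i ∈ Finset.Icc 1 k,
      x * (charCoeff n i x • x ^ (k - i)) = charCoeff n i x • x ^ (k + 1 - i) := by
    intro i hi
    simp only [Finset.mem_Icc] at hi
    rw [mul_smul_comm, ← pow_succ']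
    congr 2
    omega
  rw [Finset.sum_congr rfl h1]
  simp only [Nat.sub_self, pow_zero, Nat.succ_eq_add_one, zero_add]
  abel

lemma gradB_succ' (n k : ℕ) (x : Matrix (Fin n) (Fin n) ℂ) :
    gradB n (k+1) x = gradB n k x * x - charCoeff n (k+1) x • 1 := by
  unfold gradB
  rw [Finset.sum_Icc_succ_top (Nat.succ_le_succ (Nat.zero_le k)),
    Matrix.sub_mul, Finset.sum_mul, ← pow_succ]
  have h1 : ∀ i ∈ Finset.Icc 1 k,
      (charCoeff n i x • x ^ (k - i)) * x = charCoeff n i x • x ^ (k + 1 - i) := by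
    intro i hi
    simp only [Finset.mem_Icc] at hi
    rw [smul_mul_assoc, ← pow_succ]
    congr 2
    omega
  rw [Finset.sum_congr rfl h1]
  simp only [Nat.sub_self, pow_zero, Nat.succ_eq_add_one, zero_add]
  abel

lemma charpoly_as_sum (n : ℕ) (y : Matrix (Fin n) (Fin n) ℂ) :
    y.charpoly = X ^ n + ∑ i ∈ Finset.range n, C (y.charpoly.coeff i) * X ^ i := by
  have hd : y.charpoly.natDegree = n := by
    simp [Matrix.charpoly_natDegree_eq_dim]
  have h := (Matrix.charpoly_monic y).as_sum
  rwa [hd] at h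

lemma charpoly_eq (n : ℕ) (y : Matrix (Fin n) (Fin n) ℂ) :
    y.charpoly = X ^ n - ∑ j ∈ Finset.Icc 1 n, C (charCoeff n j y) * X ^ (n - j) := by
  have h := sum_Icc_reindex (fun i => C (y.charpoly.coeff i) * X ^ i) n
  rw [charpoly_as_sum n y]
  simp only [charCoeff, map_neg, neg_mul, Finset.sum_neg_distrib]
  rw [h, sub_neg_eq_add]

lemma gradB_card (n : ℕ) (y : Matrix (Fin n) (Fin n) ℂ) : gradB n n y = 0 := by
  have hCH := Matrix.aeval_self_charpoly y
  rw [charpoly_as_sum n y] at hCH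
  simp only [map_add, map_pow, aeval_X, map_sum, _root_.map_mul, aeval_C] at hCH
  have h := sum_Icc_reindex (fun i => y.charpoly.coeff i • y ^ i) n
  unfold gradB
  have h2 : ∀ j ∈ Finset.Icc 1 n, charCoeff n j y • y ^ (n - j)
      = -(y.charpoly.coeff (n - j) • y ^ (n - j)) := by
    intro j hj; simp [charCoeff, neg_smul]
  rw [Finset.sum_congr rfl h2, Finset.sum_neg_distrib, h]
  have h3 : ∀ i ∈ Finset.range n, y.charpoly.coeff i • y ^ i
      = algebraMap ℂ _ (y.charpoly.coeff i) * y ^ i := by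
    intro i hi; rw [Algebra.smul_def]
  rw [Finset.sum_congr rfl h3]
  rw [sub_neg_eq_add]
  exact hCH

lemma sum_Icc_shift {M : Type*} [AddCommMonoid M] (g : ℕ → M) (n : ℕ) :
    ∑ j ∈ Finset.Icc 1 n, g j = ∑ k ∈ Finset.range n, g (k + 1) := by
  refine Finset.sum_nbij' (fun j => j - 1) (fun k => k + 1) ?_ ?_ ?_ ?_ ?_ <;>
    intro a ha <;> simp only [Finset.mem_Icc, Finset.mem_range] at * <;>
    first
      | omega
      | (congr 1; omega)

noncomputable def adjP (n : ℕ) (y : Matrix (Fin n) (Fin n) ℂ) :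
    Matrix (Fin n) (Fin n) ℂ[X] :=
  ∑ k ∈ Finset.range n, (X : ℂ[X]) ^ (n - 1 - k) • (gradB n k y).map C

lemma charmatrix_eq {n : ℕ} (y : Matrix (Fin n) (Fin n) ℂ) :
    charmatrix y = (X : ℂ[X]) • (1 : Matrix (Fin n) (Fin n) ℂ[X]) - y.map C := by
  ext i j
  by_cases h : i = j
  · subst h; simp [charmatrix_apply, Matrix.one_apply]
  · simp [charmatrix_apply, Matrix.one_apply, h, Matrix.diagonal_apply_ne _ h]

lemma map_C_smul {n m : ℕ} (c : ℂ) (M : Matrix (Fin n) (Fin m) ℂ) :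
    ((c • M).map C : Matrix (Fin n) (Fin m) ℂ[X]) = C c • M.map C := by
  ext i j; simp [Matrix.map_apply]

lemma key_C (n : ℕ) (y : Matrix (Fin n) (Fin n) ℂ) :
    charmatrix y * adjP n y = y.charpoly • (1 : Matrix (Fin n) (Fin n) ℂ[X]) := by
  set f : ℕ → Matrix (Fin n) (Fin n) ℂ[X] :=
    fun j => (X : ℂ[X]) ^ (n - j) • (gradB n j y).map C with hf
  have hterm : ∀ k ∈ Finset.range n,
      charmatrix y * ((X : ℂ[X]) ^ (n - 1 - k) • (gradB n k y).map C)
        = (f k - f (k+1)) - (C (charCoeff n (k+1) y) * X ^ (n - (k+1))) • 1 := by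
    intro k hk
    simp only [Finset.mem_range] at hk
    rw [charmatrix_eq, Matrix.sub_mul]
    have h1 : ((X : ℂ[X]) • (1 : Matrix (Fin n) (Fin n) ℂ[X]))
        * ((X : ℂ[X]) ^ (n - 1 - k) • (gradB n k y).map C) = f k := by
      rw [Matrix.smul_mul, Matrix.one_mul, smul_smul, hf]
      have : (X : ℂ[X]) * X ^ (n - 1 - k) = X ^ (n - k) := by
        rw [← pow_succ']
        congr 1
        omega
      rw [this]
    have h2 : (y.map C : Matrix (Fin n) (Fin n) ℂ[X])
        * ((X : ℂ[X]) ^ (n - 1 - k) • (gradB n k y).map C)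
        = f (k+1) + (C (charCoeff n (k+1) y) * X ^ (n - (k+1))) • 1 := by
      rw [Matrix.mul_smul, ← Matrix.map_mul]
      have hyB : y * gradB n k y = gradB n (k+1) y + charCoeff n (k+1) y • 1 := by
        rw [gradB_succ]; abel
      rw [hyB]
      have hmap : ((gradB n (k+1) y + charCoeff n (k+1) y • 1).map C :
          Matrix (Fin n) (Fin n) ℂ[X])
          = (gradB n (k+1) y).map C + C (charCoeff n (k+1) y) • (1 : Matrix (Fin n) (Fin n) ℂ[X]) := by
        rw [Matrix.map_add _ (map_add C), map_C_smul, Matrix.map_one _ (map_zero C) (map_one C)]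
      have hexp : n - 1 - k = n - (k+1) := by omega
      rw [hmap, smul_add]
      have e1 : (X : ℂ[X]) ^ (n - 1 - k) • (gradB n (k+1) y).map C = f (k+1) := by
        simp only [hf, hexp]
      have e2 : (X : ℂ[X]) ^ (n - 1 - k) •
            (C (charCoeff n (k+1) y) • (1 : Matrix (Fin n) (Fin n) ℂ[X]))
          = (C (charCoeff n (k+1) y) * X ^ (n - (k+1))) • 1 := by
        rw [smul_comm, smul_smul, hexp]
      rw [e1, e2]
    rw [h1, h2]
    abel
  rw [adjP, Finset.mul_sum, Finset.sum_congr rfl hterm, Finset.sum_sub_distrib,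
    Finset.sum_range_sub' f n]
  have hf0 : f 0 = (X : ℂ[X]) ^ n • 1 := by
    rw [hf]; simp [gradB_zero, Matrix.map_one _ (map_zero C) (map_one C)]
  have hfn : f n = 0 := by
    simp only [hf, gradB_card]
    rw [Matrix.map_zero _ (map_zero C), smul_zero]
  rw [hf0, hfn, sub_zero, charpoly_eq n y, sub_smul, Finset.sum_smul]
  refine congrArg (fun s : Matrix (Fin n) (Fin n) ℂ[X] => (X : ℂ[X]) ^ n • 1 - s) ?_
  rw [sum_Icc_shift (fun j => (C (charCoeff n j y) * X ^ (n - j)) • (1 : Matrix (Fin n) (Fin n) ℂ[X])) n]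

lemma adjP_pair (n : ℕ) (y : Matrix (Fin n) (Fin n) ℂ)
    (a : Matrix (Fin n) (Fin 1) ℂ) (b : Matrix (Fin 1) (Fin n) ℂ) :
    (b.map C * adjP n y * a.map C) 0 0
      = ∑ k ∈ Finset.range n, C ((b * gradB n k y * a) 0 0) * X ^ (n - 1 - k) := by
  rw [adjP, Matrix.mul_sum, Matrix.sum_mul]
  rw [Matrix.sum_apply]
  refine Finset.sum_congr rfl fun k hk => ?_
  rw [Matrix.mul_smul, Matrix.smul_mul, ← Matrix.map_mul, ← Matrix.map_mul,
    Matrix.smul_apply, Matrix.map_apply, smul_eq_mul, mul_comm]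

set_option maxHeartbeats 1000000 in
lemma charpoly_perturb (n : ℕ) (y : Matrix (Fin n) (Fin n) ℂ)
    (a : Matrix (Fin n) (Fin 1) ℂ) (b : Matrix (Fin 1) (Fin n) ℂ) :
    (y + a * b).charpoly = y.charpoly
      - ∑ k ∈ Finset.range n, C ((b * gradB n k y * a) 0 0) * X ^ (n - 1 - k) := by
  set K := FractionRing ℂ[X]
  set φ : ℂ[X] →+* K := algebraMap ℂ[X] K with hφdef
  have hφ : Function.Injective φ := IsFractionRing.injective ℂ[X] K
  apply hφ
  set ψ : ℂ →+* K := φ.comp C with hψdef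
  set A : Matrix (Fin n) (Fin n) K := (charmatrix y).map φ with hA
  have hcm : (charmatrix (y + a * b)).map φ = A + (-(a.map ψ)) * (b.map ψ) := by
    rw [charmatrix_eq (y + a * b), hA, charmatrix_eq y]
    have : ((y + a * b).map C : Matrix (Fin n) (Fin n) ℂ[X]) = y.map C + (a*b).map C :=
      Matrix.map_add _ (map_add C) _ _
    rw [this]
    rw [sub_add_eq_sub_sub]
    have : (((X : ℂ[X]) • (1 : Matrix (Fin n) (Fin n) ℂ[X]) - y.map C - (a*b).map C).map φ)
        = ((X : ℂ[X]) • (1 : Matrix (Fin n) (Fin n) ℂ[X]) - y.map C).map φ - ((a*b).map C).map φ := by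
      rw [Matrix.map_sub _ (map_sub φ)]
    rw [this, Matrix.neg_mul, Matrix.map_map, sub_eq_add_neg, ← Matrix.map_mul]
    rfl
  have hdet : A.det = φ y.charpoly := by
    rw [hA, ← RingHom.mapMatrix_apply, ← RingHom.map_det]
    rfl
  have hc0 : φ y.charpoly ≠ 0 := by
    intro h
    exact (Matrix.charpoly_monic y).ne_zero (hφ (by simpa using h))
  have hU : IsUnit A.det := by
    rw [hdet]; exact isUnit_iff_ne_zero.mpr hc0
  have hadj : A * ((φ y.charpoly)⁻¹ • (adjP n y).map φ) = 1 := by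
    rw [Matrix.mul_smul, hA, ← Matrix.map_mul, key_C n y]
    have : ((y.charpoly • (1 : Matrix (Fin n) (Fin n) ℂ[X])).map φ)
        = φ y.charpoly • (1 : Matrix (Fin n) (Fin n) K) := by
      ext i j
      simp [Matrix.map_apply, Matrix.smul_apply, Matrix.one_apply, apply_ite φ]
    rw [this, smul_smul, inv_mul_cancel₀ hc0, one_smul]
  have hinv : A⁻¹ = (φ y.charpoly)⁻¹ • (adjP n y).map φ := Matrix.inv_eq_right_inv hadj
  have hmdl := Matrix.det_add_mul (-(a.map ψ)) (b.map ψ) hU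
  rw [← hcm] at hmdl
  have hrd : φ ((y + a * b).charpoly) = ((charmatrix (y + a*b)).map φ).det := by
    rw [← RingHom.mapMatrix_apply, ← RingHom.map_det]
    rfl
  rw [hrd, hmdl, hdet, hinv]
  have hterm : (1 + b.map ψ * ((φ y.charpoly)⁻¹ • (adjP n y).map φ) * (-(a.map ψ))).det
      = 1 - (φ y.charpoly)⁻¹ * ((b.map C * adjP n y * a.map C).map φ) 0 0 := by
    rw [Matrix.det_fin_one]
    rw [Matrix.add_apply, Matrix.one_apply_eq]
    congr 1
    rw [Matrix.mul_neg, Matrix.neg_apply, Matrix.mul_smul, Matrix.smul_mul, Matrix.smul_apply,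
      smul_eq_mul]
    rw [← neg_mul]
    have hmm : ((b.map C * adjP n y * a.map C).map φ : Matrix (Fin 1) (Fin 1) K)
        = b.map ψ * (adjP n y).map φ * a.map ψ := by
      rw [Matrix.map_mul, Matrix.map_mul, Matrix.map_map, Matrix.map_map]
      rfl
    rw [hmm]; ring
  rw [hterm, ← adjP_pair n y a b, map_sub, Matrix.map_apply, mul_sub, mul_one,
    mul_inv_cancel_left₀ hc0]


lemma charCoeff_perturb (n j : ℕ) (hj1 : 1 ≤ j) (hjn : j ≤ n)
    (y : Matrix (Fin n) (Fin n) ℂ)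
    (a : Matrix (Fin n) (Fin 1) ℂ) (b : Matrix (Fin 1) (Fin n) ℂ) :
    charCoeff n j (y + a * b) = charCoeff n j y + (b * gradB n (j-1) y * a) 0 0 := by
  unfold charCoeff
  rw [charpoly_perturb n y a b, Polynomial.coeff_sub, Polynomial.finset_sum_coeff]
  have hpick : ∑ k ∈ Finset.range n, (C ((b * gradB n k y * a) 0 0) * X ^ (n - 1 - k)).coeff (n - j)
      = (b * gradB n (j-1) y * a) 0 0 := by
    rw [Finset.sum_eq_single (j-1)]
    · rw [coeff_C_mul, coeff_X_pow, if_pos (by omega), mul_one]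
    · intro k hk hne
      rw [coeff_C_mul, coeff_X_pow, if_neg (by simp only [Finset.mem_range] at hk; omega), mul_zero]
    · intro h
      exact absurd (Finset.mem_range.mpr (by omega)) h
  rw [hpick]
  ring

-- 1×1 absorption
lemma col_absorb {n : ℕ} (ξ : Matrix (Fin n) (Fin 1) ℂ) (s : Matrix (Fin 1) (Fin 1) ℂ) :
    ξ * s = (s 0 0) • ξ := by
  ext i j
  rw [Matrix.mul_apply, Fin.sum_univ_one, Matrix.smul_apply, smul_eq_mul,
    Subsingleton.elim j 0, mul_comm]

lemma row_absorb {n : ℕ} (w : Matrix (Fin 1) (Fin n) ℂ) (s : Matrix (Fin 1) (Fin 1) ℂ) :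
    s * w = (s 0 0) • w := by
  ext i j
  rw [Matrix.mul_apply, Fin.sum_univ_one, Matrix.smul_apply, smul_eq_mul,
    Subsingleton.elim i 0]

lemma gradB_right (n : ℕ) (y : Matrix (Fin n) (Fin n) ℂ)
    (ξ : Matrix (Fin n) (Fin 1) ℂ) (vs : Matrix (Fin 1) (Fin n) ℂ) :
    ∀ k, k ≤ n - 1 → gradB n k (y + ξ * vs) * ξ = gradB n k y * ξ := by
  intro k
  induction k with
  | zero => intro _; rw [gradB_zero, gradB_zero]
  | succ k ih =>
    intro hk
    have hIH := ih (by omega)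
    have hF := charCoeff_perturb n (k+1) (by omega) (by omega) y ξ vs
    simp only [Nat.add_sub_cancel] at hF
    rw [gradB_succ, gradB_succ, Matrix.sub_mul, Matrix.sub_mul, Matrix.mul_assoc, hIH,
      ← Matrix.mul_assoc, Matrix.add_mul, Matrix.mul_assoc, hF]
    have habs : ξ * (vs * gradB n k y) * ξ = ((vs * gradB n k y * ξ) 0 0) • ξ := by
      rw [Matrix.mul_assoc]; exact col_absorb _ _
    rw [Matrix.add_mul, habs]
    simp only [Matrix.add_mul, Matrix.smul_mul, Matrix.one_mul, add_smul]
    abel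

lemma gradB_left (n : ℕ) (y : Matrix (Fin n) (Fin n) ℂ)
    (u : Matrix (Fin n) (Fin 1) ℂ) (w : Matrix (Fin 1) (Fin n) ℂ) :
    ∀ k, k ≤ n - 1 → w * gradB n k (y + u * w) = w * gradB n k y := by
  intro k
  induction k with
  | zero => intro _; rw [gradB_zero, gradB_zero]
  | succ k ih =>
    intro hk
    have hIH := ih (by omega)
    have hF := charCoeff_perturb n (k+1) (by omega) (by omega) y u w
    simp only [Nat.add_sub_cancel] at hF
    rw [gradB_succ', gradB_succ', Matrix.mul_sub, Matrix.mul_sub, ← Matrix.mul_assoc, hIH,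
      Matrix.mul_assoc, Matrix.mul_add, hF]
    have habs : w * (gradB n k y * (u * w)) = ((w * gradB n k y * u) 0 0) • w := by
      rw [← Matrix.mul_assoc, ← Matrix.mul_assoc, row_absorb]
    rw [Matrix.mul_add, habs]
    simp only [Matrix.mul_add, Matrix.mul_smul, Matrix.mul_one, add_smul]
    abel

lemma gyg_pow {n : ℕ} (g g' y : Matrix (Fin n) (Fin n) ℂ) (h : g * g' = 1) (m : ℕ) :
    (g * y * g') ^ m = g * y ^ m * g' := by
  have h' : g' * g = 1 := mul_eq_one_comm.mp h
  induction m with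
  | zero => simp [pow_zero, ← Matrix.mul_assoc, h]
  | succ m ih =>
    rw [pow_succ, pow_succ, ih]
    calc g * y ^ m * g' * (g * y * g') = g * y ^ m * (g' * g) * y * g' := by
          simp only [Matrix.mul_assoc]
      _ = g * (y ^ m * y) * g' := by rw [h', Matrix.mul_one]; simp only [Matrix.mul_assoc]

lemma charpoly_conj {n : ℕ} (g y : Matrix (Fin n) (Fin n) ℂ) (hg : IsUnit g.det) :
    (g * y * g⁻¹).charpoly = y.charpoly := by
  have h1 : g * g⁻¹ = 1 := Matrix.mul_nonsing_inv g hg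
  have hcm : charmatrix (g * y * g⁻¹) = g.map C * charmatrix y * (g⁻¹).map C := by
    rw [charmatrix_eq, charmatrix_eq]
    rw [Matrix.mul_sub, Matrix.sub_mul]
    congr 1
    · rw [Matrix.mul_smul, Matrix.mul_one, Matrix.smul_mul, ← Matrix.map_mul, h1,
        Matrix.map_one _ (map_zero C) (map_one C)]
    · rw [← Matrix.map_mul, ← Matrix.map_mul]
  rw [Matrix.charpoly, Matrix.charpoly, hcm, Matrix.det_mul, Matrix.det_mul]
  have h2 : (g.map C : Matrix (Fin n) (Fin n) ℂ[X]).det * ((g⁻¹).map C).det = 1 := by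
    rw [← Matrix.det_mul, ← Matrix.map_mul, h1, Matrix.map_one _ (map_zero C) (map_one C),
      Matrix.det_one]
  calc (g.map C : Matrix (Fin n) (Fin n) ℂ[X]).det * (charmatrix y).det * ((g⁻¹).map C).det
      = (charmatrix y).det * ((g.map C : Matrix (Fin n) (Fin n) ℂ[X]).det * ((g⁻¹).map C).det) := by
        ring
    _ = (charmatrix y).det := by rw [h2, mul_one]

lemma gradB_conj (n k : ℕ) (g y : Matrix (Fin n) (Fin n) ℂ) (hg : IsUnit g.det) :
    gradB n k (g * y * g⁻¹) = g * gradB n k y * g⁻¹ := by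
  have h1 : g * g⁻¹ = 1 := Matrix.mul_nonsing_inv g hg
  have hcc : ∀ i, charCoeff n i (g * y * g⁻¹) = charCoeff n i y := by
    intro i; unfold charCoeff; rw [charpoly_conj g y hg]
  unfold gradB
  rw [Matrix.mul_sub, Matrix.sub_mul, gyg_pow g g⁻¹ y h1, Matrix.mul_sum, Matrix.sum_mul]
  congr 1
  refine Finset.sum_congr rfl fun i hi => ?_
  rw [hcc, gyg_pow g g⁻¹ y h1, mul_smul_comm, Matrix.smul_mul]

end Aux

/-- `F_k` is invariant under the translations `y ↦ y + ξ v*` and `y ↦ y + u w*`,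
hence under the full coadjoint action of `GL(n) ⋉ (V ⊕ V*)`. -/
theorem stmt9 (n : ℕ) (k : ℕ) (hk : k ≤ n - 1) (y : Matrix (Fin n) (Fin n) ℂ)
    (wstar : Matrix (Fin 1) (Fin n) ℂ) (xi : Matrix (Fin n) (Fin 1) ℂ) :
    (∀ vstar : Matrix (Fin 1) (Fin n) ℂ,
        Finv n k (y + xi * vstar) wstar xi = Finv n k y wstar xi) ∧
    (∀ u : Matrix (Fin n) (Fin 1) ℂ,
        Finv n k (y + u * wstar) wstar xi = Finv n k y wstar xi) ∧
    (∀ (g : Matrix (Fin n) (Fin n) ℂ), IsUnit g.det →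
      ∀ (u : Matrix (Fin n) (Fin 1) ℂ) (vstar : Matrix (Fin 1) (Fin n) ℂ),
        Finv n k (g * (y + u * wstar + xi * vstar) * g⁻¹) (wstar * g⁻¹) (g * xi)
          = Finv n k y wstar xi) := by
  have hR : ∀ (y' : Matrix (Fin n) (Fin n) ℂ) (vs : Matrix (Fin 1) (Fin n) ℂ),
      Finv n k (y' + xi * vs) wstar xi = Finv n k y' wstar xi := by
    intro y' vs
    unfold Finv
    rw [Matrix.mul_assoc, Matrix.mul_assoc, gradB_right n y' xi vs k hk]
  have hL : ∀ (y' : Matrix (Fin n) (Fin n) ℂ) (u : Matrix (Fin n) (Fin 1) ℂ),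
      Finv n k (y' + u * wstar) wstar xi = Finv n k y' wstar xi := by
    intro y' u
    unfold Finv
    rw [gradB_left n y' u wstar k hk]
  refine ⟨fun vs => hR y vs, fun u => hL y u, ?_⟩
  intro g hg u vs
  have hgi : g⁻¹ * g = 1 := Matrix.nonsing_inv_mul g hg
  have hconj : ∀ z : Matrix (Fin n) (Fin n) ℂ,
      Finv n k (g * z * g⁻¹) (wstar * g⁻¹) (g * xi) = Finv n k z wstar xi := by
    intro z
    unfold Finv
    rw [gradB_conj n k g z hg]
    have cancel : ∀ M : Matrix (Fin n) (Fin 1) ℂ, g⁻¹ * (g * M) = M := by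
      intro M; rw [← Matrix.mul_assoc, hgi, Matrix.one_mul]
    simp only [Matrix.mul_assoc]
    rw [cancel, cancel]
  rw [hconj (y + u * wstar + xi * vs), hR (y + u * wstar) vs, hL y u]
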